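/- Let U be a weakly Ramsey ultrafilter on ℕ that is not selective, witnessed by an interval partition ⟨[p_n, p_{n+1})⟩ with no selection set in U. Then for every f : ℕ → ℕ there exists A ∈ U such that exactly one of the following holds: (i) f is constant on A; (ii) f is increasing on A; (iii) f is constant on A ∩ [p_n, p_{n+1}) for each n and f(x) < f(y) whenever x, y ∈ A lie in different intervals with x < y; (iv) f is decreasing on A ∩ [p_n, p_{n+1}) for each n and f(x) < f(y) whenever x, y ∈ A lie in different intervals with x < y. -/

import Mathlib

def Nonprincipal (U : Ultrafilter ℕ) : Prop := ∀ A : Set ℕ, A.Finite → A ∉ U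

def UnboundedModU (U : Ultrafilter ℕ) (f : ℕ → ℕ) : Prop := ∀ n : ℕ, {x | n < f x} ∈ U

def NondecrModU (U : Ultrafilter ℕ) (g : ℕ → ℕ) : Prop :=
  ∃ A ∈ U, ∀ x ∈ A, ∀ y ∈ A, x ≤ y → g x ≤ g y

def QSfor (U : Ultrafilter ℕ) (f : ℕ → ℕ) : Prop :=
  ∀ g : ℕ → ℕ, {x | g x ≤ f x} ∈ U → NondecrModU U g

def Selective (U : Ultrafilter ℕ) : Prop := ∀ g : ℕ → ℕ, NondecrModU U g

def Rapid (U : Ultrafilter ℕ) : Prop :=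
  ∀ g : ℕ → ℕ, StrictMono g → ∃ A ∈ U, ∀ n, 1 ≤ n → (A ∩ Set.Iic (g n)).ncard < n

def WeaklyRamsey (U : Ultrafilter ℕ) : Prop :=
  ∀ (k : ℕ) (c : ℕ → ℕ → Fin k), ∃ A ∈ U, ∃ i j : Fin k,
    ∀ x ∈ A, ∀ y ∈ A, x < y → c x y = i ∨ c x y = j

def leU (U : Ultrafilter ℕ) (f g : ℕ → ℕ) : Prop := {x | f x ≤ g x} ∈ U

def QPoint (U : Ultrafilter ℕ) : Prop :=
  ∀ p : ℕ → ℕ, p 0 = 0 → StrictMono p →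
    ∃ A ∈ U, ∀ n, (A ∩ Set.Ico (p n) (p (n+1))).Subsingleton

def TypeI (f : ℕ → ℕ) (A : Set ℕ) : Prop := ∀ x ∈ A, ∀ y ∈ A, f x = f y

def TypeII (f : ℕ → ℕ) (A : Set ℕ) : Prop := ∀ x ∈ A, ∀ y ∈ A, x < y → f x < f y

def Cross (p f : ℕ → ℕ) (A : Set ℕ) : Prop :=
  ∀ x ∈ A, ∀ y ∈ A, ∀ n, x < p n → p n ≤ y → f x < f y

def TypeIII (p f : ℕ → ℕ) (A : Set ℕ) : Prop :=
  (∀ n, ∀ x ∈ A ∩ Set.Ico (p n) (p (n+1)), ∀ y ∈ A ∩ Set.Ico (p n) (p (n+1)), f x = f y) ∧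
  Cross p f A

def TypeIV (p f : ℕ → ℕ) (A : Set ℕ) : Prop :=
  (∀ n, ∀ x ∈ A ∩ Set.Ico (p n) (p (n+1)), ∀ y ∈ A ∩ Set.Ico (p n) (p (n+1)), x < y → f y < f x) ∧
  Cross p f A


/-- x and y lie in different intervals of the partition given by p (for x below y). -/
def crossI (p : ℕ → ℕ) (x y : ℕ) : Prop := ∃ n, x < p n ∧ p n ≤ y

open scoped Classical in
/-- the 6-coloring: crossing status × comparison of f-values -/
noncomputable def col (p f : ℕ → ℕ) (x y : ℕ) : Fin 6 :=
  if crossI p x y then (if f x < f y then 3 else if f x = f y then 4 else 5)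
  else (if f x < f y then 0 else if f x = f y then 1 else 2)

lemma col_cross_cases {p f : ℕ → ℕ} {x y : ℕ} (h : crossI p x y) :
    col p f x y = 3 ∨ col p f x y = 4 ∨ col p f x y = 5 := by
  unfold col; rw [if_pos h]; split_ifs <;> simp

lemma col_noncross_cases {p f : ℕ → ℕ} {x y : ℕ} (h : ¬ crossI p x y) :
    col p f x y = 0 ∨ col p f x y = 1 ∨ col p f x y = 2 := by
  unfold col; rw [if_neg h]; split_ifs <;> simp

lemma col_cross_lt {p f : ℕ → ℕ} {x y : ℕ} (h : crossI p x y) (h3 : col p f x y = 3) :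
    f x < f y := by
  unfold col at h3; rw [if_pos h] at h3; split_ifs at h3 <;> first | assumption | exact absurd h3 (by decide)

lemma col_cross_eq {p f : ℕ → ℕ} {x y : ℕ} (h : crossI p x y) (h4 : col p f x y = 4) :
    f x = f y := by
  unfold col at h4; rw [if_pos h] at h4; split_ifs at h4 <;> first | assumption | exact absurd h4 (by decide)

lemma col_cross_gt {p f : ℕ → ℕ} {x y : ℕ} (h : crossI p x y) (h5 : col p f x y = 5) :
    f y < f x := by
  unfold col at h5; rw [if_pos h] at h5
  split_ifs at h5 with h1 h2
  · exact absurd h5 (by decide)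
  · exact absurd h5 (by decide)
  · omega

lemma col_noncross_lt {p f : ℕ → ℕ} {x y : ℕ} (h : ¬ crossI p x y) (h0 : col p f x y = 0) :
    f x < f y := by
  unfold col at h0; rw [if_neg h] at h0; split_ifs at h0 <;> first | assumption | exact absurd h0 (by decide)

lemma col_noncross_eq {p f : ℕ → ℕ} {x y : ℕ} (h : ¬ crossI p x y) (h1 : col p f x y = 1) :
    f x = f y := by
  unfold col at h1; rw [if_neg h] at h1; split_ifs at h1 <;> first | assumption | exact absurd h1 (by decide)

lemma col_noncross_gt {p f : ℕ → ℕ} {x y : ℕ} (h : ¬ crossI p x y) (h2 : col p f x y = 2) :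
    f y < f x := by
  unfold col at h2; rw [if_neg h] at h2
  split_ifs at h2 with ha hb
  · exact absurd h2 (by decide)
  · exact absurd h2 (by decide)
  · omega

lemma col_ne {p f : ℕ → ℕ} {x y a b : ℕ} (h1 : crossI p x y) (h2 : ¬ crossI p a b) :
    col p f x y ≠ col p f a b := by
  intro h
  unfold col at h; rw [if_pos h1, if_neg h2] at h
  split_ifs at h <;> exact absurd h (by decide)

lemma pick6 {α : Type*} {i j a b d : α} (ha : a = i ∨ a = j) (hb : b = i ∨ b = j)
    (hd : d = i ∨ d = j) (had : a ≠ d) (hbd : b ≠ d) : a = b := by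
  rcases ha with h|h <;> rcases hb with h'|h' <;> rcases hd with h''|h'' <;> subst h <;> simp_all

lemma locInterval {p : ℕ → ℕ} (hp0 : p 0 = 0) (hpm : StrictMono p) (x : ℕ) :
    ∃ n, p n ≤ x ∧ x < p (n+1) := by
  have hex : ∃ m, x < p m := ⟨x+1, lt_of_lt_of_le (Nat.lt_succ_self x) (hpm.le_apply)⟩
  classical
  have hm : x < p (Nat.find hex) := Nat.find_spec hex
  have hm0 : Nat.find hex ≠ 0 := by
    intro h0; rw [h0, hp0] at hm; omega
  refine ⟨Nat.find hex - 1, ?_, ?_⟩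
  · by_contra hlt
    push_neg at hlt
    exact Nat.find_min hex (Nat.sub_lt (Nat.pos_of_ne_zero hm0) one_pos) hlt
  · have : Nat.find hex - 1 + 1 = Nat.find hex := by omega
    rwa [this]

lemma notCrossOfSame {p : ℕ → ℕ} (hpm : StrictMono p) {n x y : ℕ}
    (hx : x ∈ Set.Ico (p n) (p (n+1))) (hy : y ∈ Set.Ico (p n) (p (n+1))) :
    ¬ crossI p x y := by
  rintro ⟨m, hxm, hmy⟩
  have hmn : m ≤ n := by
    by_contra h
    have : p (n+1) ≤ p m := hpm.monotone (by omega)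
    have := hy.2; omega
  have : p m ≤ p n := hpm.monotone hmn
  have := hx.1; omega

lemma sameOfNotCross {p : ℕ → ℕ} (hp0 : p 0 = 0) (hpm : StrictMono p) {x y : ℕ}
    (hxy : x ≤ y) (h : ¬ crossI p x y) :
    ∃ n, p n ≤ x ∧ x < p (n+1) ∧ p n ≤ y ∧ y < p (n+1) := by
  obtain ⟨n, h1, h2⟩ := locInterval hp0 hpm x
  refine ⟨n, h1, h2, le_trans h1 hxy, ?_⟩
  by_contra hy
  push_neg at hy
  exact h ⟨n+1, h2, hy⟩

theorem stmt13 (U : Ultrafilter ℕ) (hNP : Nonprincipal U) (hWR : WeaklyRamsey U)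
    (p : ℕ → ℕ) (hp0 : p 0 = 0) (hpm : StrictMono p)
    (hsel : ¬ ∃ A ∈ U, ∀ n, (A ∩ Set.Ico (p n) (p (n+1))).Subsingleton)
    (f : ℕ → ℕ) :
    ∃ A ∈ U,
      (TypeI f A ∧ ¬ TypeII f A ∧ ¬ TypeIII p f A ∧ ¬ TypeIV p f A) ∨
      (¬ TypeI f A ∧ TypeII f A ∧ ¬ TypeIII p f A ∧ ¬ TypeIV p f A) ∨
      (¬ TypeI f A ∧ ¬ TypeII f A ∧ TypeIII p f A ∧ ¬ TypeIV p f A) ∨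
      (¬ TypeI f A ∧ ¬ TypeII f A ∧ ¬ TypeIII p f A ∧ TypeIV p f A) := by
  classical
  have hple : ∀ n, n ≤ p n := fun n => hpm.le_apply
  have hxpm : ∀ x : ℕ, x < p (x+1) := fun x => lt_of_lt_of_le (Nat.lt_succ_self x) (hple (x+1))
  obtain ⟨A, hA, i, j, hc⟩ := hWR 6 (col p f)
  have hAinf : A.Infinite := by
    intro hfin; exact hNP A hfin hA
  have hbig : ∀ m : ℕ, ∃ z ∈ A, m < z := fun m => hAinf.exists_gt m
  -- a cross partner above any bound
  have hcrossAbove : ∀ x ∈ A, ∀ m, x < p m → ∃ z ∈ A, x < z ∧ crossI p x z ∧ p m ≤ z := by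
    intro x hx m hxm
    obtain ⟨z, hz, hzgt⟩ := hbig (p m)
    exact ⟨z, hz, lt_trans hxm hzgt, ⟨m, hxm, hzgt.le⟩, hzgt.le⟩
  -- a same-interval pair from non-selectivity
  push_neg at hsel
  obtain ⟨n₀, hns⟩ := hsel A hA
  change (A ∩ Set.Ico (p n₀) (p (n₀+1))).Nontrivial at hns
  obtain ⟨a, ha, b, hb, hab⟩ := hns
  obtain ⟨xs, ys, hxs, hys, hsxy, hxsI, hysI⟩ :
      ∃ xs ys, xs ∈ A ∧ ys ∈ A ∧ xs < ys ∧
        xs ∈ Set.Ico (p n₀) (p (n₀+1)) ∧ ys ∈ Set.Ico (p n₀) (p (n₀+1)) := by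
    rcases hab.lt_or_gt with h|h
    · exact ⟨a, b, ha.1, hb.1, h, ha.2, hb.2⟩
    · exact ⟨b, a, hb.1, ha.1, h, hb.2, ha.2⟩
  have hnotCr : ¬ crossI p xs ys := notCrossOfSame hpm hxsI hysI
  -- a cross pair
  obtain ⟨zc, hzc, hzlt, hzcr, -⟩ := hcrossAbove xs hxs (xs+1) (hxpm xs)
  have hsame0 := hc xs hxs ys hys hsxy
  have hcross0 := hc xs hxs zc hzc hzlt
  have keyCross : ∀ x ∈ A, ∀ y ∈ A, x < y → crossI p x y → col p f x y = col p f xs zc := by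
    intro x hx y hy hxy hcr
    exact pick6 (hc x hx y hy hxy) hcross0 hsame0 (col_ne hcr hnotCr) (col_ne hzcr hnotCr)
  have keySame : ∀ x ∈ A, ∀ y ∈ A, x < y → ¬ crossI p x y → col p f x y = col p f xs ys := by
    intro x hx y hy hxy hncr
    exact pick6 (hc x hx y hy hxy) hsame0 hcross0 ((col_ne hzcr hncr).symm)
      ((col_ne hzcr hnotCr).symm)
  rcases col_cross_cases (f := f) hzcr with ht3 | ht4 | ht5
  · -- cross pairs increase: Cross holds
    have hCross : Cross p f A := by
      intro x hx y hy m hxm hmy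
      have hxy : x < y := lt_of_lt_of_le hxm hmy
      exact col_cross_lt ⟨m, hxm, hmy⟩ ((keyCross x hx y hy hxy ⟨m, hxm, hmy⟩).trans ht3)
    have hfzc : f xs < f zc := by
      obtain ⟨m, h1, h2⟩ := hzcr; exact hCross xs hxs zc hzc m h1 h2
    rcases col_noncross_cases (f := f) hnotCr with hs0 | hs1 | hs2
    · -- Type II
      have hII : TypeII f A := by
        intro x hx y hy hxy
        by_cases hcr : crossI p x y
        · obtain ⟨m, h1, h2⟩ := hcr; exact hCross x hx y hy m h1 h2
        · exact col_noncross_lt hcr ((keySame x hx y hy hxy hcr).trans hs0)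
      have hfs : f xs < f ys := hII xs hxs ys hys hsxy
      refine ⟨A, hA, Or.inr (Or.inl ⟨?_, hII, ?_, ?_⟩)⟩
      · intro h1; have := h1 xs hxs ys hys; omega
      · intro h3; have := h3.1 n₀ xs ⟨hxs, hxsI⟩ ys ⟨hys, hysI⟩; omega
      · intro h4; have := h4.1 n₀ xs ⟨hxs, hxsI⟩ ys ⟨hys, hysI⟩ hsxy; omega
    · -- Type III
      have hpiece : ∀ n, ∀ x ∈ A ∩ Set.Ico (p n) (p (n+1)),
          ∀ y ∈ A ∩ Set.Ico (p n) (p (n+1)), f x = f y := by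
        suffices h : ∀ n, ∀ x ∈ A ∩ Set.Ico (p n) (p (n+1)),
            ∀ y ∈ A ∩ Set.Ico (p n) (p (n+1)), x < y → f x = f y by
          intro n x hx y hy
          rcases lt_trichotomy x y with h'|rfl|h'
          exacts [h n x hx y hy h', rfl, (h n y hy x hx h').symm]
        intro n x hx y hy hxy
        have hncr : ¬ crossI p x y := notCrossOfSame hpm hx.2 hy.2
        exact col_noncross_eq hncr ((keySame x hx.1 y hy.1 hxy hncr).trans hs1)
      have hfeq : f xs = f ys := hpiece n₀ xs ⟨hxs, hxsI⟩ ys ⟨hys, hysI⟩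
      refine ⟨A, hA, Or.inr (Or.inr (Or.inl ⟨?_, ?_, ⟨hpiece, hCross⟩, ?_⟩))⟩
      · intro h1; have := h1 xs hxs zc hzc; omega
      · intro h2; have := h2 xs hxs ys hys hsxy; omega
      · intro h4; have := h4.1 n₀ xs ⟨hxs, hxsI⟩ ys ⟨hys, hysI⟩ hsxy; omega
    · -- Type IV
      have hpiece : ∀ n, ∀ x ∈ A ∩ Set.Ico (p n) (p (n+1)),
          ∀ y ∈ A ∩ Set.Ico (p n) (p (n+1)), x < y → f y < f x := by
        intro n x hx y hy hxy
        have hncr : ¬ crossI p x y := notCrossOfSame hpm hx.2 hy.2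
        exact col_noncross_gt hncr ((keySame x hx.1 y hy.1 hxy hncr).trans hs2)
      have hfgt : f ys < f xs := hpiece n₀ xs ⟨hxs, hxsI⟩ ys ⟨hys, hysI⟩ hsxy
      refine ⟨A, hA, Or.inr (Or.inr (Or.inr ⟨?_, ?_, ?_, ⟨hpiece, hCross⟩⟩))⟩
      · intro h1; have := h1 xs hxs ys hys; omega
      · intro h2; have := h2 xs hxs ys hys hsxy; omega
      · intro h3; have := h3.1 n₀ xs ⟨hxs, hxsI⟩ ys ⟨hys, hysI⟩; omega
  · -- cross pairs have equal f-values: f constant on A (Type I)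
    have crossEq : ∀ x ∈ A, ∀ y ∈ A, x < y → crossI p x y → f x = f y := by
      intro x hx y hy hxy hcr
      exact col_cross_eq hcr ((keyCross x hx y hy hxy hcr).trans ht4)
    have hconst : TypeI f A := by
      suffices h : ∀ x ∈ A, ∀ y ∈ A, x < y → f x = f y by
        intro x hx y hy
        rcases lt_trichotomy x y with h'|rfl|h'
        exacts [h x hx y hy h', rfl, (h y hy x hx h').symm]
      intro x hx y hy hxy
      by_cases hcr : crossI p x y
      · exact crossEq x hx y hy hxy hcr
      · obtain ⟨n, hx1, hx2, hy1, hy2⟩ := sameOfNotCross hp0 hpm hxy.le hcr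
        obtain ⟨z, hz, hyz, hcrY, hplez⟩ := hcrossAbove y hy (n+1) hy2
        have hcrX : crossI p x z := ⟨n+1, hx2, hplez⟩
        exact (crossEq x hx z hz (lt_trans hxy hyz) hcrX).trans
          (crossEq y hy z hz hyz hcrY).symm
    have hfzc : f xs = f zc := crossEq xs hxs zc hzc hzlt hzcr
    refine ⟨A, hA, Or.inl ⟨hconst, ?_, ?_, ?_⟩⟩
    · intro h2; have := h2 xs hxs ys hys hsxy; have := hconst xs hxs ys hys; omega
    · intro h3
      obtain ⟨m, h1, h2⟩ := hzcr
      have := h3.2 xs hxs zc hzc m h1 h2; omega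
    · intro h4
      obtain ⟨m, h1, h2⟩ := hzcr
      have := h4.2 xs hxs zc hzc m h1 h2; omega
  · -- cross pairs decrease: impossible (infinite descent)
    exfalso
    have hdesc : ∀ k, ∀ x ∈ A, f x < k → False := by
      intro k
      induction k with
      | zero => intro x _ h; omega
      | succ k ih =>
        intro x hx hfx
        obtain ⟨z, hz, hxz, hcr, -⟩ := hcrossAbove x hx (x+1) (hxpm x)
        have hlt := col_cross_gt hcr ((keyCross x hx z hz hxz hcr).trans ht5)
        exact ih z hz (by omega)
    obtain ⟨x, hx⟩ := hAinf.nonempty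
    exact hdesc (f x + 1) x hx (Nat.lt_succ_self _)
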